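/- Let θ ∈ (0,1) and p_k = θ(1−θ)^{k−1}. Then Σ_{k,l≥1} p_k p_l / max(k,l) = Σ_{k≥1} p_k/k − g(1−θ), where g(z) = Σ_{k≥1} z^k(1−z^k)/(k(k+1)). -/

import Mathlib

open Filter Finset Topology

/-- Telescoping: `∑_{m ≥ n} 1/((m+1)(m+2)) = 1/(n+1)`. -/
private lemma tele (n : ℕ) :
    HasSum (fun m : ℕ => if n ≤ m then (1:ℝ) / ((m + 1) * (m + 2)) else 0)
      (1 / ((n : ℝ) + 1)) := by
  set f : ℕ → ℝ := fun j => 1 / ((n : ℝ) + j + 1) with hf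
  have hstep : HasSum (fun j : ℕ => f j - f (j + 1)) (1 / ((n : ℝ) + 1)) := by
    have hnn : ∀ j : ℕ, 0 ≤ f j - f (j + 1) := by
      intro j
      have h1 : (0:ℝ) < (n : ℝ) + j + 1 := by positivity
      have h2 : ((n : ℝ) + j + 1) ≤ (n : ℝ) + (j + 1 : ℕ) + 1 := by push_cast; linarith
      have := one_div_le_one_div_of_le h1 h2
      simp only [hf]
      linarith
    rw [hasSum_iff_tendsto_nat_of_nonneg hnn]
    have hps : ∀ N : ℕ, ∑ j ∈ Finset.range N, (f j - f (j + 1)) = f 0 - f N :=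
      fun N => Finset.sum_range_sub' f N
    simp only [hps]
    have h0 : f 0 = 1 / ((n : ℝ) + 1) := by simp [hf]
    rw [h0]
    have htend : Tendsto f atTop (𝓝 0) := by
      have h1 : Tendsto (fun N : ℕ => 1 / ((N : ℝ) + 1)) atTop (𝓝 0) :=
        tendsto_one_div_add_atTop_nhds_zero_nat
      have h2 : Tendsto (fun N : ℕ => 1 / ((↑(N + n) : ℝ) + 1)) atTop (𝓝 0) :=
        (Filter.tendsto_add_atTop_iff_nat n).mpr h1
      convert h2 using 2 with N
      simp only [hf]
      push_cast
      ring_nf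
    have := Tendsto.sub (tendsto_const_nhds (x := 1 / ((n : ℝ) + 1))) htend
    simpa using this
  have heq : ∀ j : ℕ,
      (if n ≤ j + n then (1:ℝ) / ((↑(j + n) + 1) * (↑(j + n) + 2)) else 0)
        = f j - f (j + 1) := by
    intro j
    rw [if_pos (Nat.le_add_left n j)]
    have h1 : (0:ℝ) < (n : ℝ) + j + 1 := by positivity
    have h2 : (0:ℝ) < (n : ℝ) + j + 2 := by positivity
    simp only [hf]
    push_cast
    rw [div_sub_div _ _ (by linarith) (by linarith : ((n:ℝ) + ((j:ℝ)+1) + 1) ≠ 0)]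
    rw [div_eq_div_iff (by positivity) (by nlinarith)]
    ring
  have h3 : HasSum (fun j : ℕ =>
      if n ≤ j + n then (1:ℝ) / ((↑(j + n) + 1) * (↑(j + n) + 2)) else 0)
      (1 / ((n : ℝ) + 1)) := by
    simp only [heq]; exact hstep
  have h4 := (hasSum_nat_add_iff
    (f := fun m : ℕ => if n ≤ m then (1:ℝ) / ((m + 1) * (m + 2)) else 0) n).mp h3
  have h5 : ∑ i ∈ Finset.range n,
      (if n ≤ i then (1:ℝ) / ((i + 1) * (i + 2)) else 0) = 0 := by
    apply Finset.sum_eq_zero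
    intro i hi
    rw [if_neg (by simpa using Finset.mem_range.mp hi)]
  rw [h5, add_zero] at h4
  exact h4

/-- With `p_k = θ(1-θ)^{k-1}`,
`∑_{k,l ≥ 1} p_k p_l / max(k,l) = ∑_{k ≥ 1} p_k/k − g(1-θ)`,
where `g(z) = ∑_{k ≥ 1} z^k(1-z^k)/(k(k+1))`. -/
theorem stmt_19 (θ : ℝ) (hθ : θ ∈ Set.Ioo (0 : ℝ) 1) :
    ∑' kl : ℕ × ℕ, (θ * (1 - θ) ^ kl.1) * (θ * (1 - θ) ^ kl.2) / (max (kl.1 + 1) (kl.2 + 1))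
      = (∑' k : ℕ, (θ * (1 - θ) ^ k) / (k + 1))
        - ∑' k : ℕ, (1 - θ) ^ (k + 1) * (1 - (1 - θ) ^ (k + 1)) / ((k + 1) * (k + 2)) := by
  obtain ⟨hθ0, hθ1⟩ := hθ
  set z : ℝ := 1 - θ with hzdef
  have hz0 : 0 < z := by simp only [hzdef]; linarith
  have hz1 : z < 1 := by simp only [hzdef]; linarith
  -- notation
  set p : ℕ → ℝ := fun k => θ * z ^ k with hp
  set c : ℕ → ℝ := fun m => 1 / (((m : ℝ) + 1) * ((m : ℝ) + 2)) with hc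
  have hpnn : ∀ k, 0 ≤ p k := fun k => mul_nonneg hθ0.le (pow_nonneg hz0.le k)
  have hcnn : ∀ m, 0 ≤ c m := fun m => by simp only [hc]; positivity
  have hpsum : Summable p := (summable_geometric_of_lt_one hz0.le hz1).mul_left θ
  have hcsum : Summable c := by
    have := (tele 0).summable
    simpa only [Nat.zero_le, if_true] using this
  have hzp1 : ∀ m : ℕ, 0 < z ^ (m + 1) := fun m => pow_pos hz0 _
  have hzl1 : ∀ m : ℕ, z ^ (m + 1) ≤ 1 := fun m => pow_le_one₀ hz0.le hz1.le
  -- geometric partial sums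
  have hgeo : ∀ m : ℕ, ∑ k ∈ Finset.range (m + 1), p k = 1 - z ^ (m + 1) := by
    intro m
    have hθz : θ = 1 - z := by rw [hzdef]; ring
    induction m with
    | zero =>
      rw [Finset.sum_range_one]
      simp only [hp, pow_zero, mul_one, zero_add, pow_one]
      linarith
    | succ n ih =>
      rw [Finset.sum_range_succ, ih]
      simp only [hp]
      rw [hθz]
      ring
  -- the telescoping sums scaled by constants
  have key1 : ∀ k : ℕ, HasSum (fun m : ℕ => if k ≤ m then p k * c m else 0)
      (p k / ((k : ℝ) + 1)) := by
    intro k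
    have h := (tele k).mul_left (p k)
    rw [div_eq_mul_one_div]
    convert h using 1
    · rfl
    funext m
    simp only [hc, mul_ite, mul_zero]
  have key2 : ∀ kl : ℕ × ℕ, HasSum
      (fun m : ℕ => if max kl.1 kl.2 ≤ m then p kl.1 * p kl.2 * c m else 0)
      (p kl.1 * p kl.2 / ((max kl.1 kl.2 : ℕ) + 1 : ℝ)) := by
    intro kl
    have h := (tele (max kl.1 kl.2)).mul_left (p kl.1 * p kl.2)
    rw [div_eq_mul_one_div]
    convert h using 1
    · rfl
    funext m
    simp only [hc, mul_ite, mul_zero]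
  -- summability of the double/triple families
  have hF1sum : Summable (fun x : ℕ × ℕ => if x.1 ≤ x.2 then p x.1 * c x.2 else 0) := by
    refine Summable.of_nonneg_of_le (fun b => ?_) (fun b => ?_)
      (hpsum.mul_of_nonneg hcsum hpnn hcnn)
    · split
      · exact mul_nonneg (hpnn _) (hcnn _)
      · exact le_rfl
    · split
      · exact le_rfl
      · exact mul_nonneg (hpnn _) (hcnn _)
  have hppsum : Summable (fun x : ℕ × ℕ => p x.1 * p x.2) :=
    hpsum.mul_of_nonneg hpsum hpnn hpnn
  have hppnn : ∀ x : ℕ × ℕ, 0 ≤ p x.1 * p x.2 := fun x => mul_nonneg (hpnn _) (hpnn _)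
  have hF2sum : Summable (fun x : (ℕ × ℕ) × ℕ =>
      if max x.1.1 x.1.2 ≤ x.2 then p x.1.1 * p x.1.2 * c x.2 else 0) := by
    refine Summable.of_nonneg_of_le (fun b => ?_) (fun b => ?_)
      (hppsum.mul_of_nonneg hcsum hppnn hcnn)
    · split
      · exact mul_nonneg (hppnn _) (hcnn _)
      · exact le_rfl
    · split
      · exact le_rfl
      · exact mul_nonneg (hppnn _) (hcnn _)
  -- first sum
  have hT1 : ∑' k : ℕ, p k / ((k : ℝ) + 1) = ∑' m : ℕ, (1 - z ^ (m + 1)) * c m := by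
    calc ∑' k : ℕ, p k / ((k : ℝ) + 1)
        = ∑' (k : ℕ) (m : ℕ), (if k ≤ m then p k * c m else 0) :=
          tsum_congr fun k => ((key1 k).tsum_eq).symm
      _ = ∑' (m : ℕ) (k : ℕ), (if k ≤ m then p k * c m else 0) :=
          (Summable.tsum_comm (f := fun k m : ℕ => if k ≤ m then p k * c m else 0) hF1sum).symm
      _ = ∑' m : ℕ, (1 - z ^ (m + 1)) * c m := by
          refine tsum_congr fun m => ?_
          rw [tsum_eq_sum (s := Finset.range (m + 1))
            (by intro k hk; rw [if_neg]; simpa using Finset.mem_range.not.mp hk)]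
          rw [Finset.sum_congr rfl
            (fun k hk => if_pos (Nat.lt_succ_iff.mp (Finset.mem_range.mp hk)))]
          rw [← Finset.sum_mul, hgeo]
  -- double sum
  have hL : ∑' kl : ℕ × ℕ, p kl.1 * p kl.2 / ((max kl.1 kl.2 : ℕ) + 1 : ℝ)
      = ∑' m : ℕ, (1 - z ^ (m + 1)) ^ 2 * c m := by
    calc ∑' kl : ℕ × ℕ, p kl.1 * p kl.2 / ((max kl.1 kl.2 : ℕ) + 1 : ℝ)
        = ∑' (kl : ℕ × ℕ) (m : ℕ),
            (if max kl.1 kl.2 ≤ m then p kl.1 * p kl.2 * c m else 0) :=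
          tsum_congr fun kl => ((key2 kl).tsum_eq).symm
      _ = ∑' (m : ℕ) (kl : ℕ × ℕ),
            (if max kl.1 kl.2 ≤ m then p kl.1 * p kl.2 * c m else 0) :=
          (Summable.tsum_comm (f := fun (kl : ℕ × ℕ) (m : ℕ) =>
            if max kl.1 kl.2 ≤ m then p kl.1 * p kl.2 * c m else 0) hF2sum).symm
      _ = ∑' m : ℕ, (1 - z ^ (m + 1)) ^ 2 * c m := by
          refine tsum_congr fun m => ?_
          rw [tsum_eq_sum (s := Finset.range (m + 1) ×ˢ Finset.range (m + 1))
            (by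
              intro kl hkl
              rw [if_neg]
              intro hle
              exact hkl (Finset.mem_product.mpr
                ⟨Finset.mem_range.mpr (Nat.lt_succ_of_le (le_trans (le_max_left _ _) hle)),
                 Finset.mem_range.mpr (Nat.lt_succ_of_le (le_trans (le_max_right _ _) hle))⟩))]
          rw [Finset.sum_congr rfl (fun kl hkl => if_pos (by
            obtain ⟨h1, h2⟩ := Finset.mem_product.mp hkl
            exact max_le (Nat.lt_succ_iff.mp (Finset.mem_range.mp h1))
              (Nat.lt_succ_iff.mp (Finset.mem_range.mp h2))))]
          rw [← Finset.sum_mul]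
          congr 1
          · rw [Finset.sum_product, ← Finset.sum_mul_sum, hgeo, sq]
  -- summability of the limiting series
  have hs1 : Summable (fun m : ℕ => (1 - z ^ (m + 1)) * c m) := by
    apply Summable.of_nonneg_of_le (f := c) _ _ hcsum
    · intro m; exact mul_nonneg (by linarith [hzl1 m]) (hcnn m)
    · intro m
      nth_rewrite 2 [show c m = 1 * c m by ring]
      exact mul_le_mul_of_nonneg_right (by linarith [hzp1 m]) (hcnn m)
  have hs2 : Summable (fun m : ℕ => z ^ (m + 1) * (1 - z ^ (m + 1)) * c m) := by
    apply Summable.of_nonneg_of_le (f := c) _ _ hcsum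
    · intro m
      exact mul_nonneg (mul_nonneg (hzp1 m).le (by linarith [hzl1 m])) (hcnn m)
    · intro m
      nth_rewrite 2 [show c m = 1 * c m by ring]
      refine mul_le_mul_of_nonneg_right ?_ (hcnn m)
      nlinarith [hzp1 m, hzl1 m]
  -- rewrite the statement
  have hLHS : ∑' kl : ℕ × ℕ,
      (θ * z ^ kl.1) * (θ * z ^ kl.2) / ((max (kl.1 + 1) (kl.2 + 1) : ℕ) : ℝ)
      = ∑' kl : ℕ × ℕ, p kl.1 * p kl.2 / ((max kl.1 kl.2 : ℕ) + 1 : ℝ) := by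
    refine tsum_congr fun kl => ?_
    have : max (kl.1 + 1) (kl.2 + 1) = max kl.1 kl.2 + 1 := Nat.succ_max_succ _ _
    rw [this]
    push_cast
    rfl
  have hG : ∑' k : ℕ, z ^ (k + 1) * (1 - z ^ (k + 1)) / (((k : ℝ) + 1) * ((k : ℝ) + 2))
      = ∑' m : ℕ, z ^ (m + 1) * (1 - z ^ (m + 1)) * c m := by
    refine tsum_congr fun k => ?_
    simp only [hc]
    rw [div_eq_mul_one_div]
  calc ∑' kl : ℕ × ℕ,
        (θ * z ^ kl.1) * (θ * z ^ kl.2) / ((max (kl.1 + 1) (kl.2 + 1) : ℕ) : ℝ)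
      = ∑' m : ℕ, (1 - z ^ (m + 1)) ^ 2 * c m := by rw [hLHS, hL]
    _ = ∑' m : ℕ, ((1 - z ^ (m + 1)) * c m - z ^ (m + 1) * (1 - z ^ (m + 1)) * c m) :=
        tsum_congr fun m => by ring
    _ = (∑' m : ℕ, (1 - z ^ (m + 1)) * c m)
        - ∑' m : ℕ, z ^ (m + 1) * (1 - z ^ (m + 1)) * c m := Summable.tsum_sub hs1 hs2
    _ = (∑' k : ℕ, (θ * z ^ k) / ((k : ℝ) + 1))
        - ∑' k : ℕ, z ^ (k + 1) * (1 - z ^ (k + 1)) / (((k : ℝ) + 1) * ((k : ℝ) + 2)) := by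
        rw [hG, ← hT1]
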